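/- Let G be a finite connected simple graph on n ≥ 2 vertices whose resistance curvature satisfies κ_i ≥ K for all vertices i, for some K > 0. Then every nonzero eigenvalue λ of the Laplacian matrix L = D − A satisfies λ ≥ 2K; in particular the smallest positive eigenvalue λ₂ of L satisfies λ₂ ≥ 2K. -/

import Mathlib

open Finset SimpleGraph Matrix

/-- The resistance matrix of a graph: `Ω i j = Γ⁻¹ i i + Γ⁻¹ j j - 2 Γ⁻¹ i j`
where `Γ = L + (1/n) J` with `L` the Laplacian and `J` the all-ones matrix. -/
noncomputable def resistanceMatrix {V : Type*} [Fintype V] [DecidableEq V]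
    (G : SimpleGraph V) [DecidableRel G.Adj] : Matrix V V ℝ :=
  Matrix.of fun i j =>
    letI Γinv := (G.lapMatrix ℝ + Matrix.of fun _ _ => (1 : ℝ) / Fintype.card V)⁻¹
    Γinv i i + Γinv j j - 2 * Γinv i j

/-- Lichnerowicz-type estimate: every nonzero eigenvalue of the Laplacian `L = D - A`
of a graph with resistance curvature bounded below by `K > 0` is at least `2K`. -/
theorem laplacian_eigenvalue_ge_of_resistance_curvature_ge
    {V : Type*} [Fintype V] [DecidableEq V]
    (G : SimpleGraph V) [DecidableRel G.Adj]
    (hconn : G.Connected) (hn : 2 ≤ Fintype.card V)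
    (κ : V → ℝ) (hκ : resistanceMatrix G *ᵥ κ = fun _ => 1)
    (K : ℝ) (hK : 0 < K) (hcurv : ∀ i, K ≤ κ i) :
    ∀ (μ : ℝ) (v : V → ℝ), v ≠ 0 → G.lapMatrix ℝ *ᵥ v = μ • v → μ ≠ 0 →
      2 * K ≤ μ := by
  classical
  intro μ v hv hev hμ
  have hcard : 0 < Fintype.card V := by omega
  have hcardR : (0:ℝ) < (Fintype.card V : ℝ) := by exact_mod_cast hcard
  have hne : Nonempty V := Fintype.card_pos_iff.mp hcard
  set Γ : Matrix V V ℝ := G.lapMatrix ℝ + Matrix.of fun _ _ => (1:ℝ)/(Fintype.card V) with hΓdef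
  set H : Matrix V V ℝ := Γ⁻¹ with hHdef
  have hΩ : ∀ i j, resistanceMatrix G i j = H i i + H j j - 2 * H i j := fun i j => rfl
  have hLps := SimpleGraph.posSemidef_lapMatrix ℝ G
  -- the all-ones/n part of the quadratic form
  have hJform : ∀ x : V → ℝ,
      x ⬝ᵥ (((Matrix.of fun _ _ => (1:ℝ)/(Fintype.card V)) : Matrix V V ℝ) *ᵥ x)
        = (∑ i, x i) * (∑ i, x i) / (Fintype.card V) := by
    intro x
    have h1 : ∀ i, ((((Matrix.of fun _ _ => (1:ℝ)/(Fintype.card V)) : Matrix V V ℝ)) *ᵥ x) i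
        = (∑ j, x j) / (Fintype.card V) := by
      intro i
      simp [Matrix.mulVec, dotProduct, div_mul_eq_mul_div, Finset.sum_div]
      exact Finset.sum_congr rfl fun j _ => (div_eq_inv_mul _ _).symm
    simp only [dotProduct, h1]
    rw [← Finset.sum_mul]
    ring
  -- Γ is positive definite
  have hΓpd : Γ.PosDef := by
    refine Matrix.posDef_iff_dotProduct_mulVec.mpr ⟨?_, ?_⟩
    · rw [Matrix.IsHermitian, Matrix.conjTranspose_eq_transpose_of_trivial, hΓdef,
        Matrix.transpose_add]
      congr 1
      exact G.isSymm_lapMatrix (R := ℝ)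
    · intro x hx
      rw [star_trivial, hΓdef, Matrix.add_mulVec, dotProduct_add, hJform]
      have hq : (0:ℝ) ≤ x ⬝ᵥ (G.lapMatrix ℝ *ᵥ x) := by
        have := (Matrix.posSemidef_iff_dotProduct_mulVec.mp hLps).2 x; rwa [star_trivial] at this
      have hs : (0:ℝ) ≤ (∑ i, x i) * (∑ i, x i) / (Fintype.card V) :=
        div_nonneg (mul_self_nonneg _) hcardR.le
      rcases lt_or_eq_of_le hq with h | h
      · exact add_pos_of_pos_of_nonneg h hs
      rcases lt_or_eq_of_le hs with h' | h'
      · exact add_pos_of_nonneg_of_pos hq h'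
      -- both zero: contradiction with x ≠ 0
      exfalso
      have hsum : (∑ i, x i) = 0 := by
        have h'' := (div_eq_zero_iff.mp h'.symm).resolve_right hcardR.ne'
        exact mul_self_eq_zero.mp h''
      have hconst : ∀ i j : V, x i = x j := by
        have h0 : Matrix.toLinearMap₂' ℝ (G.lapMatrix ℝ) x x = 0 := by
          rw [Matrix.toLinearMap₂'_apply']
          exact h.symm
        rw [lapMatrix_toLinearMap₂'_apply'_eq_zero_iff_forall_reachable] at h0
        intro i j
        exact h0 i j (hconn.preconnected i j)
      obtain ⟨i0⟩ := hne
      have hcc : ∑ i, x i = (Fintype.card V : ℝ) * x i0 := by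
        rw [Finset.sum_congr rfl (fun i _ => hconst i i0), Finset.sum_const,
          nsmul_eq_mul, Fintype.card]
      rw [hsum] at hcc
      have hx0 : x i0 = 0 := by
        rcases mul_eq_zero.mp hcc.symm with h'' | h''
        · exact absurd h'' hcardR.ne'
        · exact h''
      exact hx (funext fun i => by simp [hconst i i0, hx0])
  have hHpd : H.PosDef := hΓpd.inv
  have hHsymm : ∀ i j, H i j = H j i := by
    intro i j
    have := hHpd.isHermitian.apply i j
    simpa using this.symm
  -- μ > 0
  have hvv : 0 < v ⬝ᵥ v := by
    rcases lt_or_eq_of_le (Finset.sum_nonneg fun i _ => mul_self_nonneg (v i)) with h | h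
    · exact h
    · exfalso
      apply hv
      funext i
      have := (Finset.sum_eq_zero_iff_of_nonneg fun i _ => mul_self_nonneg (v i)).mp h.symm
      exact mul_self_eq_zero.mp (this i (Finset.mem_univ i))
  have hquadv : v ⬝ᵥ (G.lapMatrix ℝ *ᵥ v) = μ * (v ⬝ᵥ v) := by
    rw [hev]
    simp [dotProduct, Finset.mul_sum]
    congr 1
    funext i
    ring
  have hμpos : 0 < μ := by
    have hq : (0:ℝ) ≤ μ * (v ⬝ᵥ v) := by
      rw [← hquadv]
      have := (Matrix.posSemidef_iff_dotProduct_mulVec.mp hLps).2 v; rwa [star_trivial] at this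
    rcases hμ.lt_or_gt with h | h
    · nlinarith
    · exact h
  -- sum of v is zero
  have hsumv : ∑ i, v i = 0 := by
    have h1 : (fun _ => (1:ℝ)) ⬝ᵥ (G.lapMatrix ℝ *ᵥ v) = 0 := by
      rw [Matrix.dotProduct_mulVec]
      have h2 : (fun _ => (1:ℝ)) ᵥ* G.lapMatrix ℝ = 0 := by
        rw [← Matrix.mulVec_transpose, G.isSymm_lapMatrix (R := ℝ)]
        exact G.lapMatrix_mulVec_const_eq_zero
      rw [h2]
      simp
    rw [hev] at h1
    simp only [dotProduct, Pi.smul_apply, smul_eq_mul, one_mul] at h1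
    rw [← Finset.mul_sum] at h1
    exact (mul_eq_zero.mp h1).resolve_left hμ
  -- Γ v = μ v
  have hΓv : Γ *ᵥ v = μ • v := by
    rw [hΓdef, Matrix.add_mulVec, hev]
    have hJv : ((Matrix.of fun _ _ => (1:ℝ)/(Fintype.card V)) : Matrix V V ℝ) *ᵥ v = 0 := by
      funext i
      simp [Matrix.mulVec, dotProduct, ← Finset.mul_sum, hsumv]
    rw [hJv, add_zero]
  -- H v = μ⁻¹ v
  have hHv : H *ᵥ v = μ⁻¹ • v := by
    have hdet : IsUnit Γ.det := Matrix.isUnit_iff_isUnit_det Γ |>.mp hΓpd.isUnit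
    have h1 : H *ᵥ (Γ *ᵥ v) = v := by
      rw [Matrix.mulVec_mulVec, hHdef, Matrix.nonsing_inv_mul Γ hdet, Matrix.one_mulVec]
    rw [hΓv, Matrix.mulVec_smul] at h1
    have h2 : H *ᵥ v = μ⁻¹ • (μ • (H *ᵥ v)) := by
      rw [smul_smul, inv_mul_cancel₀ hμ, one_smul]
    rw [h2, h1]
  -- the key formula for Ω v
  set S : ℝ := ∑ j, H j j * v j with hSdef
  have hΩv : ∀ i, (resistanceMatrix G *ᵥ v) i = S - 2 * (μ⁻¹ * v i) := by
    intro i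
    have h1 : (resistanceMatrix G *ᵥ v) i = ∑ j, (H i i + H j j - 2 * H i j) * v j := by
      simp only [Matrix.mulVec, dotProduct]
      exact Finset.sum_congr rfl fun j _ => by rw [hΩ]
    rw [h1]
    have h2 : ∑ j, (H i i + H j j - 2 * H i j) * v j
        = H i i * (∑ j, v j) + (∑ j, H j j * v j) - 2 * (∑ j, H i j * v j) := by
      rw [Finset.mul_sum, Finset.mul_sum, ← Finset.sum_add_distrib, ← Finset.sum_sub_distrib]
      exact Finset.sum_congr rfl fun j _ => by ring
    rw [h2, hsumv]
    have h3 : (∑ j, H i j * v j) = μ⁻¹ * v i := by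
      have := congrFun hHv i
      simpa [Matrix.mulVec, dotProduct] using this
    rw [h3]
    ring
  -- Ω has nonnegative entries
  have hΩnn : ∀ i j, 0 ≤ resistanceMatrix G i j := by
    intro i j
    by_cases hij : i = j
    · subst hij; rw [hΩ]; ring_nf; exact le_refl 0
    · set x : V → ℝ := Pi.single i 1 - Pi.single j 1 with hxdef
      have hx : x ≠ 0 := by
        intro h
        have := congrFun h i
        simp [hxdef, Pi.single_apply, hij] at this
      have hq := hHpd.dotProduct_mulVec_pos hx
      rw [star_trivial] at hq
      have hform : x ⬝ᵥ (H *ᵥ x) = H i i + H j j - H i j - H j i := by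
        rw [hxdef]
        rw [Matrix.mulVec_sub, Matrix.mulVec_single, Matrix.mulVec_single]
        rw [sub_dotProduct, dotProduct_sub, dotProduct_sub]
        simp [single_dotProduct]
        ring
      rw [hΩ, hHsymm i j] at *
      rw [hform] at hq
      linarith [hq]
  -- choose max and min
  obtain ⟨a, -, ha⟩ := Finset.exists_max_image Finset.univ v Finset.univ_nonempty
  obtain ⟨b, -, hb⟩ := Finset.exists_min_image Finset.univ v Finset.univ_nonempty
  have ha' : ∀ j, v j ≤ v a := fun j => ha j (Finset.mem_univ j)
  have hb' : ∀ j, v b ≤ v j := fun j => hb j (Finset.mem_univ j)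
  have hva : 0 < v a := by
    by_contra h
    push_neg at h
    have hall : ∀ i ∈ Finset.univ, v i ≤ 0 := fun i _ => le_trans (ha' i) h
    have := (Finset.sum_eq_zero_iff_of_nonpos hall).mp hsumv
    exact hv (funext fun i => this i (Finset.mem_univ i))
  have hvb : v b < 0 := by
    by_contra h
    push_neg at h
    have hall : ∀ i ∈ Finset.univ, 0 ≤ v i := fun i _ => le_trans h (hb' i)
    have := (Finset.sum_eq_zero_iff_of_nonneg hall).mp hsumv
    exact hv (funext fun i => this i (Finset.mem_univ i))
  -- lower bound at the max
  have hκa : (resistanceMatrix G *ᵥ κ) a = 1 := congrFun hκ a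
  have hκb : (resistanceMatrix G *ᵥ κ) b = 1 := congrFun hκ b
  have hbound1 : v b / K ≤ (resistanceMatrix G *ᵥ v) a := by
    have hstep : ∀ j, (v b / K) * κ j ≤ v j := by
      intro j
      have h1 : v b / K ≤ 0 := div_nonpos_of_nonpos_of_nonneg hvb.le hK.le
      have h2 : (v b / K) * κ j ≤ (v b / K) * K :=
        mul_le_mul_of_nonpos_left (hcurv j) h1
      rw [div_mul_cancel₀ _ hK.ne'] at h2
      exact le_trans h2 (hb' j)
    calc v b / K = (v b / K) * (resistanceMatrix G *ᵥ κ) a := by rw [hκa, mul_one]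
      _ = ∑ j, resistanceMatrix G a j * ((v b / K) * κ j) := by
          simp only [Matrix.mulVec, dotProduct, Finset.mul_sum]
          exact Finset.sum_congr rfl fun j _ => by ring
      _ ≤ ∑ j, resistanceMatrix G a j * v j :=
          Finset.sum_le_sum fun j _ => mul_le_mul_of_nonneg_left (hstep j) (hΩnn a j)
      _ = (resistanceMatrix G *ᵥ v) a := rfl
  -- upper bound at the min
  have hbound2 : (resistanceMatrix G *ᵥ v) b ≤ v a / K := by
    have hstep : ∀ j, v j ≤ (v a / K) * κ j := by
      intro j
      have h1 : 0 ≤ v a / K := div_nonneg hva.le hK.le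
      have h2 : (v a / K) * K ≤ (v a / K) * κ j :=
        mul_le_mul_of_nonneg_left (hcurv j) h1
      rw [div_mul_cancel₀ _ hK.ne'] at h2
      exact le_trans (ha' j) h2
    calc (resistanceMatrix G *ᵥ v) b
        = ∑ j, resistanceMatrix G b j * v j := rfl
      _ ≤ ∑ j, resistanceMatrix G b j * ((v a / K) * κ j) :=
          Finset.sum_le_sum fun j _ => mul_le_mul_of_nonneg_left (hstep j) (hΩnn b j)
      _ = (v a / K) * (resistanceMatrix G *ᵥ κ) b := by
          simp only [Matrix.mulVec, dotProduct, Finset.mul_sum]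
          exact Finset.sum_congr rfl fun j _ => by ring
      _ = v a / K := by rw [hκb, mul_one]
  -- combine
  rw [hΩv a] at hbound1
  rw [hΩv b] at hbound2
  have ht : 0 < v a - v b := by linarith
  have h2μ : 2 * μ⁻¹ ≤ 1 / K := by
    by_contra hc
    push_neg at hc
    have hc2 : 0 < (2 * μ⁻¹ - 1 / K) * (v a - v b) := mul_pos (by linarith) ht
    have hexp : (2 * μ⁻¹ - 1 / K) * (v a - v b)
        = (2 * (μ⁻¹ * v a) - 2 * (μ⁻¹ * v b)) - (v a / K - v b / K) := by
      ring
    rw [hexp] at hc2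
    linarith [hbound1, hbound2]
  have h2μ' : 2 / μ ≤ 1 / K := by rw [div_eq_mul_inv]; exact h2μ
  have := (div_le_div_iff₀ hμpos hK).mp h2μ'
  linarith
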